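/- Assume: (i) each F_i is integrable on B; (ii) each G_j is continuous on B, differentiable at every point of the interior of B, and the divergence x ↦ ∑_{j=1}^{d} ∂_{x_j} G_j(x) is integrable on B; (iii) for every x in the interior of B, ∑_{i=0}^{L} c_i·F_i(x) = ∑_{j=1}^{d} ∂_{x_j} G_j(x); (iv) for each j, G_j(x) = 0 for every x ∈ B whose j-th coordinate x_j equals u_j or o_j. Then ∑_{i=0}^{L} c_i·∫_B F_i(x) dx = 0. -/

import Mathlib

open MeasureTheory

/-- If the integrand satisfies the Almkvist–Zeilberger integrand recurrence on the box and
the certificates vanish on the boundary faces, then the integral satisfies the homogeneous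
linear recurrence `∑ e_i(n) I(n+i) = 0`. -/
theorem box_integral_homogeneous_recurrence
    (d L : ℕ) (hd : 1 ≤ d)
    (u o : Fin d → ℝ) (huo : ∀ j, u j < o j)
    (c : Fin (L + 1) → ℝ)
    (F : Fin (L + 1) → (Fin d → ℝ) → ℝ)
    (G : Fin d → (Fin d → ℝ) → ℝ)
    (hFint : ∀ i, IntegrableOn (F i) (Set.Icc u o) volume)
    (hGcont : ∀ j, ContinuousOn (G j) (Set.Icc u o))
    (hGdiff : ∀ j, ∀ x ∈ interior (Set.Icc u o), DifferentiableAt ℝ (G j) x)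
    (hdiv : IntegrableOn
      (fun x => ∑ j : Fin d, fderiv ℝ (G j) x (Pi.single j (1 : ℝ))) (Set.Icc u o) volume)
    (heq : ∀ x ∈ interior (Set.Icc u o),
      ∑ i : Fin (L + 1), c i * F i x = ∑ j : Fin d, fderiv ℝ (G j) x (Pi.single j (1 : ℝ)))
    (hbd : ∀ j, ∀ x ∈ Set.Icc u o, (x j = u j ∨ x j = o j) → G j x = 0) :
    ∑ i : Fin (L + 1), c i * ∫ x in Set.Icc u o, F i x = 0 := by
  obtain ⟨n, rfl⟩ : ∃ n, d = n + 1 := ⟨d - 1, (Nat.succ_pred_eq_of_pos hd).symm⟩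
  have hIoo_sub : (Set.pi Set.univ fun j => Set.Ioo (u j) (o j)) ⊆ interior (Set.Icc u o) := by
    apply interior_maximal
    · intro x hx
      exact ⟨fun j => (hx j (Set.mem_univ j)).1.le, fun j => (hx j (Set.mem_univ j)).2.le⟩
    · exact isOpen_set_pi Set.finite_univ fun j _ => isOpen_Ioo
  -- divergence theorem
  have hdivthm := MeasureTheory.integral_divergence_of_hasFDerivAt_off_countable' u o
    (fun j => le_of_lt (huo j)) G (fun j x => fderiv ℝ (G j) x) ∅ Set.countable_empty
    hGcont
    (fun x hx j => (hGdiff j x (hIoo_sub hx.1)).hasFDerivAt)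
    hdiv
  -- all face integrals vanish
  have hfaces : ∀ (j : Fin (n + 1)) (v : ℝ), v = u j ∨ v = o j →
      (∫ x in Set.Icc (u ∘ j.succAbove) (o ∘ j.succAbove), G j (j.insertNth v x)) = 0 := by
    intro j v hv
    rw [setIntegral_congr_fun measurableSet_Icc
      (g := fun _ => (0 : ℝ)) ?_, integral_zero]
    intro x hx
    have hmem : j.insertNth v x ∈ Set.Icc u o := by
      refine Fin.insertNth_mem_Icc.2 ⟨?_, hx⟩
      rcases hv with h | h <;> simp [h, (huo j).le]
    exact hbd j _ hmem (by simpa using hv)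
  rw [Finset.sum_eq_zero (fun j _ => by
    rw [hfaces j (o j) (Or.inr rfl), hfaces j (u j) (Or.inl rfl), sub_zero])] at hdivthm
  -- rewrite LHS as integral of the linear combination
  have hswap : ∑ i : Fin (L + 1), c i * ∫ x in Set.Icc u o, F i x
      = ∫ x in Set.Icc u o, ∑ i : Fin (L + 1), c i * F i x := by
    rw [integral_finset_sum]
    · simp_rw [integral_const_mul]
    · exact fun i _ => ((hFint i).const_mul (c i))
  rw [hswap, ← hdivthm]
  have h1 : (Set.pi Set.univ fun j => Set.Ioo (u j) (o j)) =ᵐ[volume] Set.Icc u o :=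
    MeasureTheory.Measure.univ_pi_Ioo_ae_eq_Icc
  have hmeas : MeasurableSet (Set.pi Set.univ fun j => Set.Ioo (u j) (o j)) :=
    MeasurableSet.univ_pi fun j => measurableSet_Ioo
  calc (∫ x in Set.Icc u o, ∑ i : Fin (L + 1), c i * F i x)
      = ∫ x in (Set.pi Set.univ fun j => Set.Ioo (u j) (o j)),
          ∑ i : Fin (L + 1), c i * F i x := (setIntegral_congr_set h1).symm
    _ = ∫ x in (Set.pi Set.univ fun j => Set.Ioo (u j) (o j)),
          ∑ j : Fin (n + 1), fderiv ℝ (G j) x (Pi.single j (1 : ℝ)) :=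
        setIntegral_congr_fun hmeas (fun x hx => heq x (hIoo_sub hx))
    _ = ∫ x in Set.Icc u o,
          ∑ j : Fin (n + 1), fderiv ℝ (G j) x (Pi.single j (1 : ℝ)) :=
        setIntegral_congr_set h1
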